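/- Duality (reversibility) identity for the geometric transition kernel: for every 0 < λ < 1 and all m⁺, m⁻, n⁺, n⁻ ∈ ℤ₊, π_λ(m⁺) π_λ(m⁻) q(n⁺, n⁻ | m⁺, m⁻) = π_λ(n⁺) π_λ(n⁻) q(m⁻, m⁺ | n⁻, n⁺). -/

import Mathlib

/-- The geometric distribution `π_λ(k) = (1 − λ) λ^k` on `ℤ₊`. -/
noncomputable def geomPmf (l : ℝ) (k : ℕ) : ℝ := (1 - l) * l ^ k

/-- The normalizing constant
`Z_{m⁺,m⁻} = Σ_{n⁺,n⁻ ≥ 0} λ^{n⁺+n⁻} 𝟙[n⁺ − n⁻ = m⁺ − m⁻]`. -/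
noncomputable def Zpart (l : ℝ) (mp mm : ℕ) : ℝ :=
  ∑' p : ℕ × ℕ, if (p.1 : ℤ) - (p.2 : ℤ) = (mp : ℤ) - (mm : ℤ) then l ^ (p.1 + p.2) else 0

/-- The transition probability
`q(n⁺, n⁻ | m⁺, m⁻) = Z_{m⁺,m⁻}^{−1} λ^{n⁺+n⁻} 𝟙[n⁺ − n⁻ = m⁺ − m⁻]`. -/
noncomputable def qker (l : ℝ) (np nm mp mm : ℕ) : ℝ :=
  (Zpart l mp mm)⁻¹ * l ^ (np + nm) *
    (if (np : ℤ) - (nm : ℤ) = (mp : ℤ) - (mm : ℤ) then 1 else 0)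

lemma Zpart_congr (l : ℝ) (a b c d : ℕ) (h : (a : ℤ) - b = (c : ℤ) - d) :
    Zpart l a b = Zpart l c d := by
  unfold Zpart
  exact tsum_congr fun p => by rw [h]

lemma Zpart_swap (l : ℝ) (a b : ℕ) : Zpart l a b = Zpart l b a := by
  unfold Zpart
  rw [← (Equiv.prodComm ℕ ℕ).tsum_eq]
  refine tsum_congr fun p => ?_
  show (if (p.2 : ℤ) - (p.1 : ℤ) = (a : ℤ) - (b : ℤ) then l ^ (p.2 + p.1) else 0) = _
  by_cases h : (p.2 : ℤ) - p.1 = (a : ℤ) - b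
  · rw [if_pos h, if_pos (by omega), Nat.add_comm]
  · rw [if_neg h, if_neg (by omega)]

theorem geometric_kernel_duality (l : ℝ) (hl0 : 0 < l) (hl1 : l < 1)
    (mp mm np nm : ℕ) :
    geomPmf l mp * geomPmf l mm * qker l np nm mp mm =
      geomPmf l np * geomPmf l nm * qker l mm mp nm np := by
  unfold geomPmf qker
  by_cases h : (np : ℤ) - nm = (mp : ℤ) - mm
  · rw [if_pos h, if_pos (by omega)]
    have hZ : Zpart l mp mm = Zpart l nm np := by
      rw [Zpart_swap l nm np]
      exact Zpart_congr l mp mm np nm h.symm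
    rw [hZ, pow_add, pow_add]
    ring
  · rw [if_neg h, if_neg (by omega)]
    ring
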